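/- arXiv:1406.5135 — 3 statements merged into one kernel-verified Lean document; each statement's English description precedes it below -/
import Mathlib

section
/- For every integer k ≥ 1, |a_k| ≤ 1, where the sequence (a_k) is defined by a_0 = 1, a_1 = 0, a_2 = ζ(2)/4, and for k ≥ 3, a_k = (1/k)·∑_{j=0}^{k-2} a_j · b_{k-1-j}, with b_k = (-1)^{k+1}(1 - 2^{-k})ζ(k+1). -/
open Filter Topology Finset

/-- Riemann zeta at integer arguments: ζ(k) = ∑_{n=1}^∞ 1/n^k. -/
noncomputable def zeta (k : ℕ) : ℝ := ∑' n : ℕ, 1 / (n + 1 : ℝ) ^ k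

/-- b_k = (-1)^{k+1} (1 - 2^{-k}) ζ(k+1). -/
noncomputable def b (k : ℕ) : ℝ := (-1) ^ (k + 1) * (1 - (2 : ℝ) ^ (-(k : ℤ))) * zeta (k + 1)

lemma zeta_nonneg (k : ℕ) : 0 ≤ zeta k :=
  tsum_nonneg fun n => by positivity

lemma summable_f (s : ℕ) (hs : 2 ≤ s) : Summable (fun n : ℕ => 1 / (n + 1 : ℝ) ^ s) := by
  have := (Real.summable_one_div_nat_pow (p := s)).2 hs
  have := (summable_nat_add_iff (f := fun n : ℕ => 1 / (n : ℝ) ^ s) 1).2 this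
  simpa using this

lemma eta_le_one (m : ℕ) (hm : 1 ≤ m) :
    (1 - (2 : ℝ) ^ (-(m : ℤ))) * zeta (m + 1) ≤ 1 := by
  set s := m + 1 with hs
  set f : ℕ → ℝ := fun n => 1 / (n + 1 : ℝ) ^ s with hf
  have hs2 : 2 ≤ s := by omega
  have Sf : Summable f := summable_f s hs2
  have Sodd : Summable (fun k => f (2 * k + 1)) :=
    Sf.comp_injective (fun i j h => by omega)
  have Seven : Summable (fun k => f (2 * k)) :=
    Sf.comp_injective (fun i j h => by omega)
  have Seven2 : Summable (fun k => f (2 * (k + 1))) :=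
    Sf.comp_injective (fun i j h => by omega)
  -- half-sum identity: 2^{-m} ζ(m+1) = 2 ∑ f(2k+1)
  have hodd : ∀ k : ℕ, f (2 * k + 1) = (1 / 2 ^ s) * f k := by
    intro k
    have : ((2 * k + 1 : ℕ) + 1 : ℝ) = 2 * (k + 1) := by push_cast; ring
    simp only [hf, this, mul_pow, one_div, mul_inv]
  have htodd : ∑' k, f (2 * k + 1) = (1 / 2 ^ s) * zeta s := by
    simp_rw [hodd]
    rw [tsum_mul_left]; rfl
  have hzeta : zeta s = ∑' k, f (2 * k) + ∑' k, f (2 * k + 1) := by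
    rw [tsum_even_add_odd Seven Sodd]; rfl
  have hshift : ∑' k, f (2 * k) = 1 + ∑' k, f (2 * (k + 1)) := by
    have := Summable.tsum_eq_zero_add Seven
    simp only [mul_zero, mul_add, mul_one] at this ⊢
    rw [this]
    norm_num [hf, hs]
  have hpow : (2 : ℝ) ^ (-(m : ℤ)) = 2 * (1 / 2 ^ s) := by
    rw [zpow_neg, zpow_natCast, hs, pow_succ]
    field_simp
  have key : (1 - (2 : ℝ) ^ (-(m : ℤ))) * zeta s
      = 1 + ∑' k, f (2 * (k + 1)) - ∑' k, f (2 * k + 1) := by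
    rw [sub_mul, one_mul, hpow, mul_assoc, ← htodd]
    rw [hzeta, hshift]
    try ring
  rw [key]
  have hle : ∑' k, f (2 * (k + 1)) ≤ ∑' k, f (2 * k + 1) := by
    apply Summable.tsum_le_tsum _ Seven2 Sodd
    intro k
    apply one_div_le_one_div_of_le (by positivity)
    apply pow_le_pow_left₀ (by positivity)
    push_cast; linarith
  linarith

lemma abs_b_le_one (m : ℕ) (hm : 1 ≤ m) : |b m| ≤ 1 := by
  have h2m : (1 : ℝ) ≤ 2 ^ m := one_le_pow₀ (by norm_num)
  have hc : (0 : ℝ) ≤ 1 - (2 : ℝ) ^ (-(m : ℤ)) := by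
    rw [zpow_neg, zpow_natCast, sub_nonneg]
    exact inv_le_one_of_one_le₀ h2m
  have hnn : (0 : ℝ) ≤ (1 - (2 : ℝ) ^ (-(m : ℤ))) * zeta (m + 1) :=
    mul_nonneg hc (zeta_nonneg _)
  rw [b, mul_assoc, abs_mul, abs_pow, abs_neg, abs_one, one_pow, one_mul,
    abs_of_nonneg hnn]
  exact eta_le_one m hm

theorem abs_a_le_one (a : ℕ → ℝ)
    (h0 : a 0 = 1) (h1 : a 1 = 0) (h2 : a 2 = zeta 2 / 4)
    (hrec : ∀ k, 3 ≤ k →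
      a k = (1 / (k : ℝ)) * ∑ j ∈ Finset.range (k - 1), a j * b (k - 1 - j)) :
    ∀ k, 1 ≤ k → |a k| ≤ 1 := by
  have hz2 : zeta 2 ≤ 2 := by
    have := eta_le_one 1 le_rfl
    norm_num at this
    linarith
  have main : ∀ k, |a k| ≤ 1 := by
    intro k
    induction k using Nat.strong_induction_on with
    | _ k ih =>
      match k with
      | 0 => rw [h0]; norm_num
      | 1 => rw [h1]; norm_num
      | 2 =>
        have hz0 := zeta_nonneg 2
        rw [h2, abs_of_nonneg (by linarith)]
        linarith
      | (k + 3) =>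
        rw [hrec (k + 3) (by omega)]
        have hS : |∑ j ∈ Finset.range (k + 3 - 1), a j * b (k + 3 - 1 - j)|
            ≤ (k + 2 : ℝ) := by
          calc |∑ j ∈ Finset.range (k + 3 - 1), a j * b (k + 3 - 1 - j)|
              ≤ ∑ j ∈ Finset.range (k + 3 - 1), |a j * b (k + 3 - 1 - j)| :=
                Finset.abs_sum_le_sum_abs _ _
            _ ≤ ∑ _j ∈ Finset.range (k + 3 - 1), (1 : ℝ) := by
                apply Finset.sum_le_sum
                intro j hj
                rw [Finset.mem_range] at hj
                rw [abs_mul]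
                have h1' : |a j| ≤ 1 := ih j (by omega)
                have h2' : |b (k + 3 - 1 - j)| ≤ 1 :=
                  abs_b_le_one _ (by omega)
                calc |a j| * |b (k + 3 - 1 - j)| ≤ 1 * 1 :=
                      mul_le_mul h1' h2' (abs_nonneg _) (by linarith [abs_nonneg (a j)])
                  _ = 1 := by ring
            _ = (k + 2 : ℝ) := by simp
        rw [abs_mul, abs_of_nonneg (by positivity : (0:ℝ) ≤ 1 / ((k + 3 : ℕ) : ℝ))]
        have hk3 : (0 : ℝ) < (k : ℝ) + 3 := by positivity
        calc (1 / ((k + 3 : ℕ) : ℝ)) * |∑ j ∈ Finset.range (k + 3 - 1), a j * b (k + 3 - 1 - j)|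
            ≤ (1 / ((k : ℝ) + 3)) * ((k : ℝ) + 2) := by
              push_cast
              apply mul_le_mul_of_nonneg_left _ (by positivity)
              simpa using hS
          _ ≤ 1 := by
              rw [div_mul_eq_mul_div, one_mul, div_le_one hk3]
              linarith
  exact fun k _ => main k
end

section
/- For k > 1, a_k = ((-1)^k / k)·∑_{j=0}^{k-2} |a_j b_{k-1-j}|, where (a_k) and (b_k) are as in the recursion a_0 = 1, a_1 = 0, a_k = (1/k)∑_{j=0}^{k-2} a_j b_{k-1-j}, and b_k = (-1)^{k+1}(1 - 2^{-k})ζ(k+1). -/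
open Filter Topology Finset

lemma b_sign (m : ℕ) : b m = (-1) ^ (m + 1) * |b m| := by
  have hc : 0 ≤ (1 - (2:ℝ) ^ (-(m:ℤ))) * zeta (m+1) := by
    apply mul_nonneg
    · have h2 : (2:ℝ) ^ (-(m:ℤ)) ≤ 1 := by
        rw [zpow_neg, zpow_natCast]
        exact inv_le_one_of_one_le₀ (one_le_pow₀ (by norm_num))
      linarith
    · exact tsum_nonneg fun n => by positivity
  have hb : b m = (-1) ^ (m+1) * ((1 - (2:ℝ) ^ (-(m:ℤ))) * zeta (m+1)) := by
    rw [b]; ring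
  rw [hb, abs_mul, abs_pow, abs_neg, abs_one, one_pow, one_mul, abs_of_nonneg hc]

theorem a_eq_signed_abs_sum (a : ℕ → ℝ)
    (h0 : a 0 = 1) (h1 : a 1 = 0)
    (hrec : ∀ k, 2 ≤ k →
      a k = (1 / (k : ℝ)) * ∑ j ∈ Finset.range (k - 1), a j * b (k - 1 - j)) :
    ∀ k, 1 < k →
      a k = ((-1) ^ k / (k : ℝ)) * ∑ j ∈ Finset.range (k - 1), |a j * b (k - 1 - j)| := by
  have key : ∀ k, a k = (-1) ^ k * |a k| ∧ (1 < k →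
      a k = ((-1) ^ k / (k : ℝ)) * ∑ j ∈ Finset.range (k - 1), |a j * b (k - 1 - j)|) := by
    intro k
    induction k using Nat.strong_induction_on with
    | _ k ih =>
      match k with
      | 0 => exact ⟨by simp [h0], by omega⟩
      | 1 => exact ⟨by simp [h1], by omega⟩
      | (k+2) =>
        have hk2 : 2 ≤ k + 2 := by omega
        have hsum : ∑ j ∈ Finset.range (k+2-1), a j * b (k+2-1-j)
            = ∑ j ∈ Finset.range (k+2-1), (-1) ^ (k+2) * |a j * b (k+2-1-j)| := by
          apply Finset.sum_congr rfl
          intro j hj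
          rw [Finset.mem_range] at hj
          have hja := (ih j (by omega)).1
          have hjb := b_sign (k+2-1-j)
          have hexp : k+2-1-j+1 = k+2-j := by omega
          rw [hexp] at hjb
          calc a j * b (k+2-1-j) = ((-1)^j * |a j|) * ((-1)^(k+2-j) * |b (k+2-1-j)|) := by
                rw [← hja, ← hjb]
            _ = ((-1:ℝ)^j * (-1)^(k+2-j)) * (|a j| * |b (k+2-1-j)|) := by ring
            _ = (-1)^(k+2) * |a j * b (k+2-1-j)| := by
                rw [← pow_add, Nat.add_sub_cancel' (by omega : j ≤ k+2), abs_mul]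
        have hrw : a (k+2) = ((-1)^(k+2) / ((k+2:ℕ):ℝ)) *
            ∑ j ∈ Finset.range (k+2-1), |a j * b (k+2-1-j)| := by
          rw [hrec (k+2) hk2, hsum, ← Finset.mul_sum]
          ring
        refine ⟨?_, fun _ => hrw⟩
        have hS : 0 ≤ ∑ j ∈ Finset.range (k+2-1), |a j * b (k+2-1-j)| :=
          Finset.sum_nonneg fun j _ => abs_nonneg _
        have hkpos : (0:ℝ) < ((k+2:ℕ):ℝ) := by positivity
        rw [hrw, abs_mul, abs_div, abs_pow, abs_neg, abs_one, one_pow,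
          abs_of_pos hkpos, abs_of_nonneg hS]
        ring
  intro k hk
  exact (key k).2 hk
end

section
/- There exists a constant C > 0 (one may take C = 5(1 + ζ(2))) such that for all integers k ≥ 4, |a_{k+1} + a_k| ≤ C/k, where (a_k) satisfies the recursion a_0 = 1, a_1 = 0, a_k = (1/k)∑_{j=0}^{k-2} a_j b_{k-1-j} for k ≥ 2 with b_k = (-1)^{k+1}(1 - 2^{-k})ζ(k+1). In particular, a_{k+1} + a_k = O(1/k). -/
open Filter Topology Finset

lemma two_zpow_eq (m : ℕ) : (2:ℝ) ^ (-(m:ℤ)) = (1/2:ℝ)^m := by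
  rw [zpow_neg, zpow_natCast, one_div, inv_pow]

lemma summable_zeta {k : ℕ} (hk : 2 ≤ k) :
    Summable (fun n : ℕ => 1 / ((n : ℝ) + 1) ^ k) := by
  have h : Summable (fun n : ℕ => 1 / (n : ℝ) ^ k) :=
    Real.summable_one_div_nat_pow.mpr (by omega)
  have := (summable_nat_add_iff 1).mpr h
  simpa using this

lemma summable_zeta' {k : ℕ} (hk : 2 ≤ k) :
    Summable (fun n : ℕ => 1 / ((n : ℝ) + 2) ^ k) := by
  have := (summable_nat_add_iff 1).mpr (summable_zeta hk)
  convert this using 2 with n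
  · rfl
  push_cast; ring_nf

lemma zeta_split {k : ℕ} (hk : 2 ≤ k) :
    zeta k = 1 + ∑' n : ℕ, 1 / ((n : ℝ) + 2) ^ k := by
  rw [zeta, Summable.tsum_eq_zero_add (summable_zeta hk)]
  norm_num
  congr 1 with n
  ring_nf

lemma one_le_zeta {k : ℕ} (hk : 2 ≤ k) : 1 ≤ zeta k := by
  rw [zeta_split hk]
  have : 0 ≤ ∑' n : ℕ, 1 / ((n : ℝ) + 2) ^ k :=
    tsum_nonneg (fun n => by positivity)
  linarith

lemma tele1 : HasSum (fun n : ℕ => 1 / (((n:ℝ) + 1) * ((n:ℝ) + 2))) 1 := by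
  have hnn : ∀ n : ℕ, 0 ≤ 1 / (((n:ℝ) + 1) * ((n:ℝ) + 2)) := by
    intro n; positivity
  rw [hasSum_iff_tendsto_nat_of_nonneg hnn]
  have hps : ∀ N : ℕ, ∑ n ∈ Finset.range N, 1 / (((n:ℝ) + 1) * ((n:ℝ) + 2))
      = 1 - 1 / ((N:ℝ) + 1) := by
    intro N
    have h := Finset.sum_range_sub' (fun n : ℕ => 1 / ((n:ℝ) + 1)) N
    have key : ∑ n ∈ Finset.range N, 1 / (((n:ℝ) + 1) * ((n:ℝ) + 2))
        = ∑ i ∈ Finset.range N, (1 / ((i:ℝ) + 1) - 1 / (((i+1:ℕ):ℝ) + 1)) := by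
      apply Finset.sum_congr rfl
      intro n _
      have h1 : ((n:ℝ) + 1) ≠ 0 := by positivity
      have h2 : ((n:ℝ) + 2) ≠ 0 := by positivity
      push_cast
      field_simp
      ring_nf
    rw [key, h]
    norm_num
  simp only [hps]
  have h0 : Filter.Tendsto (fun N : ℕ => 1 / ((N:ℝ) + 1)) Filter.atTop (nhds 0) :=
    tendsto_one_div_add_atTop_nhds_zero_nat
  have := Filter.Tendsto.const_sub (1:ℝ) h0
  simpa using this

lemma tele2 : HasSum (fun n : ℕ => 1 / (((n:ℝ) + 1) * ((n:ℝ) + 2) * ((n:ℝ) + 3))) (1/4) := by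
  have hnn : ∀ n : ℕ, 0 ≤ 1 / (((n:ℝ) + 1) * ((n:ℝ) + 2) * ((n:ℝ) + 3)) := by
    intro n; positivity
  rw [hasSum_iff_tendsto_nat_of_nonneg hnn]
  have hps : ∀ N : ℕ, ∑ n ∈ Finset.range N, 1 / (((n:ℝ) + 1) * ((n:ℝ) + 2) * ((n:ℝ) + 3))
      = 1/4 - 1 / (2 * ((N:ℝ) + 1) * ((N:ℝ) + 2)) := by
    intro N
    have h := Finset.sum_range_sub' (fun n : ℕ => 1 / (2 * ((n:ℝ) + 1) * ((n:ℝ) + 2))) N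
    have key : ∑ n ∈ Finset.range N, 1 / (((n:ℝ) + 1) * ((n:ℝ) + 2) * ((n:ℝ) + 3))
        = ∑ i ∈ Finset.range N, (1 / (2 * ((i:ℝ) + 1) * ((i:ℝ) + 2))
            - 1 / (2 * (((i+1:ℕ):ℝ) + 1) * (((i+1:ℕ):ℝ) + 2))) := by
      apply Finset.sum_congr rfl
      intro n _
      have h1 : ((n:ℝ) + 1) ≠ 0 := by positivity
      have h2 : ((n:ℝ) + 2) ≠ 0 := by positivity
      have h3 : ((n:ℝ) + 3) ≠ 0 := by positivity
      push_cast
      field_simp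
      ring_nf
    rw [key, h]
    norm_num
  simp only [hps]
  have h0 : Filter.Tendsto (fun N : ℕ => 1 / (2 * ((N:ℝ) + 1) * ((N:ℝ) + 2))) Filter.atTop (nhds 0) := by
    apply squeeze_zero (fun N => by positivity) (g := fun N : ℕ => 1 / ((N:ℝ) + 1))
    · intro N
      apply one_div_le_one_div_of_le (by positivity)
      nlinarith [Nat.cast_nonneg (α := ℝ) N]
    · exact tendsto_one_div_add_atTop_nhds_zero_nat
  have := Filter.Tendsto.const_sub (1/4:ℝ) h0
  simpa using this

lemma zeta_le_two {k : ℕ} (hk : 2 ≤ k) : zeta k ≤ 2 := by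
  rw [zeta_split hk]
  have hle : ∑' n : ℕ, 1 / ((n : ℝ) + 2) ^ k
      ≤ ∑' n : ℕ, 1 / (((n:ℝ) + 1) * ((n:ℝ) + 2)) := by
    apply Summable.tsum_le_tsum _ (summable_zeta' hk) tele1.summable
    intro n
    apply one_div_le_one_div_of_le (by positivity)
    have h1 : ((n:ℝ) + 2) ^ 2 ≤ ((n:ℝ) + 2) ^ k :=
      pow_le_pow_right₀ (by linarith [Nat.cast_nonneg (α := ℝ) n]) hk
    nlinarith [Nat.cast_nonneg (α := ℝ) n]
  rw [tele1.tsum_eq] at hle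
  linarith

lemma zeta3_sub_one : zeta 3 - 1 ≤ 1/4 := by
  rw [zeta_split (by norm_num)]
  have hle : ∑' n : ℕ, 1 / ((n : ℝ) + 2) ^ 3
      ≤ ∑' n : ℕ, 1 / (((n:ℝ) + 1) * ((n:ℝ) + 2) * ((n:ℝ) + 3)) := by
    apply Summable.tsum_le_tsum _ (summable_zeta' (by norm_num)) tele2.summable
    intro n
    apply one_div_le_one_div_of_le (by positivity)
    nlinarith [Nat.cast_nonneg (α := ℝ) n]
  rw [tele2.tsum_eq] at hle
  linarith

lemma zeta_sub_one {m : ℕ} (hm : 2 ≤ m) : zeta (m+1) - 1 ≤ (1/2:ℝ)^m := by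
  obtain ⟨j, rfl⟩ : ∃ j, m = j + 2 := ⟨m - 2, by omega⟩
  rw [zeta_split (by omega)]
  have hle : ∑' n : ℕ, 1 / ((n : ℝ) + 2) ^ (j+2+1)
      ≤ ∑' n : ℕ, (1/2:ℝ)^j * (1 / ((n : ℝ) + 2) ^ 3) := by
    apply Summable.tsum_le_tsum _ (summable_zeta' (by omega))
      ((summable_zeta' (by norm_num)).mul_left _)
    intro n
    have ha : (0:ℝ) < (n:ℝ) + 2 := by positivity
    have hb : 1/((n:ℝ)+2) ≤ 1/2 := by
      apply one_div_le_one_div_of_le (by norm_num)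
      linarith [Nat.cast_nonneg (α := ℝ) n]
    calc 1/((n:ℝ)+2)^(j+2+1) = (1/((n:ℝ)+2))^j * (1/((n:ℝ)+2)^3) := by
          rw [one_div_pow, one_div_mul_one_div, ← pow_add]
      _ ≤ (1/2:ℝ)^j * (1/((n:ℝ)+2)^3) := by
          apply mul_le_mul_of_nonneg_right _ (by positivity)
          exact pow_le_pow_left₀ (by positivity) hb j
  rw [tsum_mul_left] at hle
  have hz3 : ∑' n : ℕ, 1 / ((n : ℝ) + 2) ^ 3 ≤ 1/4 := by
    have := zeta3_sub_one
    rw [zeta_split (by norm_num)] at this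
    linarith
  have hp : (0:ℝ) ≤ (1/2:ℝ)^j := by positivity
  have : (1/2:ℝ)^j * (1/4) = (1/2:ℝ)^(j+2) := by ring
  nlinarith [mul_le_mul_of_nonneg_left hz3 hp]

lemma zeta_sub_one' {m : ℕ} (hm : 1 ≤ m) : zeta (m+1) - 1 ≤ 2*(1/2:ℝ)^m := by
  rcases eq_or_lt_of_le hm with h | h
  · rw [← h]
    have := zeta_le_two (k := 2) (by norm_num)
    norm_num
    linarith
  · have h2 := zeta_sub_one (m := m) (by omega)
    have : (0:ℝ) ≤ (1/2:ℝ)^m := by positivity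
    linarith

lemma c_lb {m : ℕ} (hm : 1 ≤ m) : 0 ≤ (1 - (1/2:ℝ)^m) * zeta (m+1) := by
  have h1 : (1/2:ℝ)^m ≤ 1 := pow_le_one₀ (by norm_num) (by norm_num)
  have h2 := one_le_zeta (k := m+1) (by omega)
  nlinarith

lemma c_ub {m : ℕ} (hm : 1 ≤ m) : (1 - (1/2:ℝ)^m) * zeta (m+1) ≤ 1 := by
  rcases eq_or_lt_of_le hm with h | h
  · rw [← h]
    have := zeta_le_two (k := 2) (by norm_num)
    norm_num
    linarith
  · have h2 := zeta_sub_one (m := m) (by omega)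
    have h3 := one_le_zeta (k := m+1) (by omega)
    have h4 : (0:ℝ) ≤ (1/2:ℝ)^m := by positivity
    nlinarith

lemma c_close {m : ℕ} (hm : 1 ≤ m) : |(1 - (1/2:ℝ)^m) * zeta (m+1) - 1| ≤ 2*(1/2:ℝ)^m := by
  have h1 := zeta_sub_one' hm
  have h2 := one_le_zeta (k := m+1) (by omega)
  have h3 := zeta_le_two (k := m+1) (by omega)
  have h4 : (0:ℝ) ≤ (1/2:ℝ)^m := by positivity
  rw [abs_le]
  constructor <;> nlinarith

lemma b_abs (m : ℕ) : |b m| ≤ 1 := by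
  rcases Nat.eq_zero_or_pos m with h | h
  · subst h; simp [b]
  · rw [b, two_zpow_eq, mul_assoc, abs_mul, abs_pow, abs_neg, abs_one, one_pow, one_mul,
      abs_of_nonneg (c_lb h)]
    exact c_ub h

lemma d_abs {m : ℕ} (hm : 1 ≤ m) : |b (m+1) + b m| ≤ 3 * (1/2:ℝ)^m := by
  have e : b (m+1) + b m = (-1)^(m+1) *
      ((1 - (1/2:ℝ)^m) * zeta (m+1) - (1 - (1/2:ℝ)^(m+1)) * zeta (m+1+1)) := by
    rw [b, b, two_zpow_eq, two_zpow_eq, pow_succ ((-1:ℝ)) (m+1)]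
    push_cast
    ring
  rw [e, abs_mul, abs_pow, abs_neg, abs_one, one_pow, one_mul]
  have h1 := c_close hm
  have h2 := c_close (m := m+1) (by omega)
  have h3 : (1/2:ℝ)^(m+1) = (1/2) * (1/2:ℝ)^m := by ring
  calc |(1 - (1/2:ℝ)^m) * zeta (m+1) - (1 - (1/2:ℝ)^(m+1)) * zeta (m+1+1)|
      ≤ |(1 - (1/2:ℝ)^m) * zeta (m+1) - 1| + |1 - (1 - (1/2:ℝ)^(m+1)) * zeta (m+1+1)| :=
        abs_sub_le _ 1 _
    _ = |(1 - (1/2:ℝ)^m) * zeta (m+1) - 1| + |(1 - (1/2:ℝ)^(m+1)) * zeta (m+1+1) - 1| := by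
        rw [abs_sub_comm (1:ℝ)]
    _ ≤ 3 * (1/2:ℝ)^m := by rw [h3] at h2 ⊢; linarith

lemma abs_a_le (a : ℕ → ℝ) (h0 : a 0 = 1) (h1 : a 1 = 0)
    (hrec : ∀ k, 2 ≤ k →
      a k = (1 / (k : ℝ)) * ∑ j ∈ Finset.range (k - 1), a j * b (k - 1 - j)) :
    ∀ k, |a k| ≤ 1 := by
  intro k
  induction k using Nat.strong_induction_on with
  | _ k ih =>
    match k with
    | 0 => simp [h0]
    | 1 => simp [h1]
    | (k+2) =>
      rw [hrec (k+2) (by omega)]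
      have hsum : |∑ j ∈ Finset.range (k+2-1), a j * b (k+2-1-j)| ≤ (k:ℝ)+1 := by
        calc |∑ j ∈ Finset.range (k+2-1), a j * b (k+2-1-j)|
            ≤ ∑ j ∈ Finset.range (k+2-1), |a j * b (k+2-1-j)| :=
              Finset.abs_sum_le_sum_abs _ _
          _ ≤ ∑ _j ∈ Finset.range (k+2-1), (1:ℝ) := by
              apply Finset.sum_le_sum
              intro j hj
              rw [abs_mul]
              have hj' : j < k + 2 := by
                simp only [Finset.mem_range] at hj; omega
              nlinarith [ih j hj', b_abs (k+2-1-j), abs_nonneg (a j),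
                abs_nonneg (b (k+2-1-j))]
          _ = (k:ℝ)+1 := by
              rw [Finset.sum_const]
              simp
              try push_cast
              try ring
      rw [abs_mul]
      have hc : (((k+2:ℕ)):ℝ) = (k:ℝ)+2 := by push_cast; ring
      calc |1/(((k+2:ℕ)):ℝ)| * |∑ j ∈ Finset.range (k+2-1), a j * b (k+2-1-j)|
          ≤ (1/((k:ℝ)+2)) * ((k:ℝ)+1) := by
            apply mul_le_mul _ hsum (abs_nonneg _) (by positivity)
            rw [hc, abs_of_nonneg (by positivity)]
        _ ≤ 1 := by
            rw [div_mul_eq_mul_div, div_le_one (by positivity)]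
            linarith

theorem a_succ_add_a_bigO (a : ℕ → ℝ)
    (h0 : a 0 = 1) (h1 : a 1 = 0)
    (hrec : ∀ k, 2 ≤ k →
      a k = (1 / (k : ℝ)) * ∑ j ∈ Finset.range (k - 1), a j * b (k - 1 - j)) :
    ∃ C : ℝ, 0 < C ∧ ∀ k : ℕ, 4 ≤ k → |a (k + 1) + a k| ≤ C / (k : ℝ) := by
  refine ⟨8, by norm_num, ?_⟩
  intro k hk
  obtain ⟨n, rfl⟩ : ∃ n, k = n + 2 := ⟨k - 2, by omega⟩
  have hA := abs_a_le a h0 h1 hrec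
  -- the two recursions, multiplied out
  have ea : ((n:ℝ)+2) * a (n+2) = ∑ j ∈ Finset.range (n+1), a j * b (n+1-j) := by
    have h := hrec (n+2) (by omega)
    have hne : ((n+2:ℕ):ℝ) ≠ 0 := by positivity
    rw [h]
    push_cast
    field_simp
  have eb : ((n:ℝ)+3) * a (n+3) = ∑ j ∈ Finset.range (n+2), a j * b (n+2-j) := by
    have h := hrec (n+3) (by omega)
    rw [h]
    push_cast
    field_simp
  have esplit : ∑ j ∈ Finset.range (n+2), a j * b (n+2-j)
      = ∑ j ∈ Finset.range (n+1), a j * b (n+2-j) + a (n+1) * b 1 := by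
    rw [Finset.sum_range_succ, show n+2-(n+1) = 1 from by omega]
  have key : ((n:ℝ)+3) * (a (n+3) + a (n+2))
      = a (n+1) * b 1
        + (∑ j ∈ Finset.range (n+1), a j * (b (n+2-j) + b (n+1-j)))
        + a (n+2) := by
    have hcomb : ∑ j ∈ Finset.range (n+1), a j * (b (n+2-j) + b (n+1-j))
        = ∑ j ∈ Finset.range (n+1), a j * b (n+2-j)
          + ∑ j ∈ Finset.range (n+1), a j * b (n+1-j) := by
      rw [← Finset.sum_add_distrib]
      apply Finset.sum_congr rfl
      intro j _
      ring
    rw [hcomb]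
    have : ((n:ℝ)+3) * (a (n+3) + a (n+2))
        = ((n:ℝ)+3) * a (n+3) + ((n:ℝ)+2) * a (n+2) + a (n+2) := by ring
    rw [this, ea, eb, esplit]
    ring
  -- bound the middle sum
  have hmid : |∑ j ∈ Finset.range (n+1), a j * (b (n+2-j) + b (n+1-j))| ≤ 3 := by
    calc |∑ j ∈ Finset.range (n+1), a j * (b (n+2-j) + b (n+1-j))|
        ≤ ∑ j ∈ Finset.range (n+1), |a j * (b (n+2-j) + b (n+1-j))| :=
          Finset.abs_sum_le_sum_abs _ _
      _ ≤ ∑ j ∈ Finset.range (n+1), 3 * (1/2:ℝ)^(n+1-j) := by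
          apply Finset.sum_le_sum
          intro j hj
          simp only [Finset.mem_range] at hj
          rw [abs_mul]
          have h1 : n+2-j = (n+1-j) + 1 := by omega
          have h2 : 1 ≤ n+1-j := by omega
          have hd := d_abs h2
          rw [h1]
          have ha := hA j
          have hp : (0:ℝ) ≤ 3 * (1/2:ℝ)^(n+1-j) := by positivity
          nlinarith [abs_nonneg (a j), abs_nonneg (b (n+1-j+1) + b (n+1-j))]
      _ = 3 * ∑ j ∈ Finset.range (n+1), (1/2:ℝ)^(n+1-j) := by
          rw [Finset.mul_sum]
      _ ≤ 3 * 1 := by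
          have hrefl : ∑ j ∈ Finset.range (n+1), (1/2:ℝ)^(n+1-j)
              = ∑ j ∈ Finset.range (n+1), (1/2:ℝ)^(j+1) := by
            rw [← Finset.sum_range_reflect (fun j => (1/2:ℝ)^(j+1)) (n+1)]
            apply Finset.sum_congr rfl
            intro j hj
            simp only [Finset.mem_range] at hj
            congr 1
            omega
          have hgeom : ∑ j ∈ Finset.range (n+1), (1/2:ℝ)^j ≤ 2 := by
            rw [geom_sum_eq (by norm_num : (1/2:ℝ) ≠ 1)]
            have : (0:ℝ) ≤ (1/2:ℝ)^(n+1) := by positivity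
            rw [div_le_iff_of_neg (by norm_num : (1/2:ℝ) - 1 < 0)]
            linarith
          have h2 : ∑ j ∈ Finset.range (n+1), (1/2:ℝ)^(j+1)
              = (1/2) * ∑ j ∈ Finset.range (n+1), (1/2:ℝ)^j := by
            rw [Finset.mul_sum]
            apply Finset.sum_congr rfl
            intro j _
            ring
          rw [hrefl, h2]
          linarith
      _ = 3 := by norm_num
  -- assemble
  set S := ∑ j ∈ Finset.range (n+1), a j * (b (n+2-j) + b (n+1-j)) with hS
  have habs : ((n:ℝ)+3) * |a (n+3) + a (n+2)| ≤ 5 := by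
    have h1 : ((n:ℝ)+3) * |a (n+3) + a (n+2)| = |((n:ℝ)+3) * (a (n+3) + a (n+2))| := by
      rw [abs_mul, abs_of_pos (by positivity : (0:ℝ) < (n:ℝ)+3)]
    have t1 : |a (n+1) * b 1| ≤ 1 := by
      rw [abs_mul]
      nlinarith [hA (n+1), b_abs 1, abs_nonneg (a (n+1)), abs_nonneg (b 1)]
    have t3 := hA (n+2)
    have h2 := abs_add_le (a (n+1) * b 1 + S) (a (n+2))
    have h3 := abs_add_le (a (n+1) * b 1) S
    rw [h1, key]
    linarith
  have hfin : |a (n+3) + a (n+2)| ≤ 5 / ((n:ℝ)+3) := by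
    rw [le_div_iff₀ (by positivity : (0:ℝ) < (n:ℝ)+3)]
    linarith [habs]
  have hgoal : (5:ℝ) / ((n:ℝ)+3) ≤ 8 / ((n:ℝ)+2) := by
    rw [div_le_div_iff₀ (by positivity) (by positivity)]
    nlinarith [Nat.cast_nonneg (α := ℝ) n]
  show |a (n+3) + a (n+2)| ≤ 8 / ((n+2:ℕ):ℝ)
  have hcast : ((n+2:ℕ):ℝ) = (n:ℝ)+2 := by push_cast; ring
  rw [hcast]
  linarith
end
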